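/- Starting from a state on the curve σ_R(l̃, θ̃) = l̃ + 1 − cos θ̃ = 0 with θ̃ ∈ (0, π), the clockwise turning dynamics l̃' = sin θ̃, θ̃' = −1 keep the state on this curve and reach the origin (l̃, θ̃) = (0, 0) in finite time θ̃(0). -/

import Mathlib

open Real

/-- Starting on σ_R = 0 with θ̃(0) = θ₀ ∈ (0,π), the clockwise turn dynamics
keep the state on the curve l̃ = cos θ̃ - 1 and reach the origin at time θ₀. -/
theorem reach_origin_on_sigmaR (l θ : ℝ → ℝ) (θ0 : ℝ)
    (hθ0 : θ0 ∈ Set.Ioo 0 Real.pi)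
    (hinit_θ : θ 0 = θ0) (hinit_l : l 0 = Real.cos θ0 - 1)
    (hl : ∀ t, HasDerivAt l (Real.sin (θ t)) t)
    (hθ : ∀ t, HasDerivAt θ (-1) t) :
    (∀ t, l t + 1 - Real.cos (θ t) = 0) ∧ l θ0 = 0 ∧ θ θ0 = 0 := by
  -- θ t = θ0 - t
  have hθfun : ∀ t, θ t = θ0 - t := by
    have h : ∀ t, HasDerivAt (fun t => θ t - (θ0 - t)) 0 t := by
      intro t
      have := (hθ t).sub ((hasDerivAt_id t).const_sub θ0)
      exact this.congr_deriv (by norm_num)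
    have hc : ∀ t, (fun t => θ t - (θ0 - t)) t = (fun t => θ t - (θ0 - t)) 0 := by
      intro t
      exact is_const_of_deriv_eq_zero (fun x => (h x).differentiableAt)
        (fun x => (h x).deriv) t 0
    intro t
    have := hc t
    simp only [hinit_θ] at this
    linarith
  -- l t = cos (θ t) - 1
  have hlfun : ∀ t, l t = Real.cos (θ t) - 1 := by
    have h : ∀ t, HasDerivAt (fun t => l t - Real.cos (θ t)) 0 t := by
      intro t
      have hcos : HasDerivAt (fun t => Real.cos (θ t)) (-Real.sin (θ t) * (-1)) t :=
        (Real.hasDerivAt_cos (θ t)).comp t (hθ t)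
      have := (hl t).sub hcos
      exact this.congr_deriv (by ring)
    have hc : ∀ t, (fun t => l t - Real.cos (θ t)) t = (fun t => l t - Real.cos (θ t)) 0 := by
      intro t
      exact is_const_of_deriv_eq_zero (fun x => (h x).differentiableAt)
        (fun x => (h x).deriv) t 0
    intro t
    have := hc t
    simp only [hinit_θ, hinit_l] at this
    linarith
  refine ⟨fun t => by rw [hlfun t]; ring, ?_, ?_⟩
  · rw [hlfun θ0, hθfun θ0]; simp
  · rw [hθfun θ0]; ring
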